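/- For all l ∈ ℕ and n ≥ 1, the Schur parameter can be recovered from the orthogonal polynomial and the determinants by γ_{l,n+l} = −φ_n(0,l) · √(D_{l,l+n} / D_{l+1,l+n}). -/

import Mathlib

open Polynomial Filter Finset

/-- The complementary quantity `d_{k,j} = (1 - |γ_{k,j}|²)^{1/2}`. -/
noncomputable def dd (γ : ℕ → ℕ → ℂ) (k j : ℕ) : ℝ :=
  Real.sqrt (1 - ‖γ k j‖ ^ 2)

/-- The pair `(φ_n(·,l), φ♯_n(·,l))` of Szegő-type orthogonal polynomials attached to the
Schur parameters `γ` and the diagonal `s`, defined by the recurrences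
`φ_n(X,l) = d_{l,n+l}⁻¹ (X φ_{n-1}(X,l+1) - γ_{l,n+l} φ♯_{n-1}(X,l))` and
`φ♯_n(X,l) = d_{l,n+l}⁻¹ (-conj(γ_{l,n+l}) X φ_{n-1}(X,l+1) + φ♯_{n-1}(X,l))`,
with `φ_0(X,l) = φ♯_0(X,l) = s_l^{-1/2}`. -/
noncomputable def phiPair (s : ℕ → ℝ) (γ : ℕ → ℕ → ℂ) : ℕ → ℕ → Polynomial ℂ × Polynomial ℂ
  | 0, l => (Polynomial.C (((Real.sqrt (s l))⁻¹ : ℝ) : ℂ),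
             Polynomial.C (((Real.sqrt (s l))⁻¹ : ℝ) : ℂ))
  | n + 1, l =>
      (Polynomial.C (((dd γ l (n + 1 + l))⁻¹ : ℝ) : ℂ) *
         (Polynomial.X * (phiPair s γ n (l + 1)).1 -
           Polynomial.C (γ l (n + 1 + l)) * (phiPair s γ n l).2),
       Polynomial.C (((dd γ l (n + 1 + l))⁻¹ : ℝ) : ℂ) *
         (-(Polynomial.C ((starRingEnd ℂ) (γ l (n + 1 + l))) * Polynomial.X *
             (phiPair s γ n (l + 1)).1) +
           (phiPair s γ n l).2))

/-- The orthogonal polynomial `φ_n(X,l)`. -/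
noncomputable def phi (s : ℕ → ℝ) (γ : ℕ → ℕ → ℂ) (n l : ℕ) : Polynomial ℂ :=
  (phiPair s γ n l).1

/-- The reversed polynomial `φ♯_n(X,l)`. -/
noncomputable def phiSharp (s : ℕ → ℝ) (γ : ℕ → ℕ → ℂ) (n l : ℕ) : Polynomial ℂ :=
  (phiPair s γ n l).2

/-- The determinant `D_{r,q} = (∏_{k=r}^q s_k) ∏_{r ≤ k < j ≤ q} d_{k,j}²` of the positive
definite kernel associated with the parameters `γ`. -/
noncomputable def Ddet (s : ℕ → ℝ) (γ : ℕ → ℕ → ℂ) (r q : ℕ) : ℝ :=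
  (∏ k ∈ Finset.Icc r q, s k) *
    ∏ k ∈ Finset.Icc r q, ∏ j ∈ Finset.Icc (k + 1) q, (dd γ k j) ^ 2

lemma dd_pos {γ : ℕ → ℕ → ℂ} (hγ : ∀ k j, k < j → ‖γ k j‖ < 1) {k j : ℕ} (h : k < j) :
    0 < dd γ k j := by
  have h1 := hγ k j h
  have h0 : (0:ℝ) ≤ ‖γ k j‖ := norm_nonneg _
  exact Real.sqrt_pos.2 (by nlinarith)

lemma phiSharp_eval_zero (s : ℕ → ℝ) (γ : ℕ → ℕ → ℂ) (n l : ℕ) :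
    (phiSharp s γ n l).eval 0 =
      (((Real.sqrt (s l))⁻¹ * ∏ j ∈ Finset.Icc (l+1) (l+n), (dd γ l j)⁻¹ : ℝ) : ℂ) := by
  induction n with
  | zero => simp [phiSharp, phiPair]
  | succ n ih =>
      have h : l + 1 ≤ l + n + 1 := by omega
      rw [show l + (n+1) = l + n + 1 from rfl, Finset.prod_Icc_succ_top h]
      simp only [phiSharp, phiPair] at ih ⊢
      rw [show n + 1 + l = l + n + 1 from by omega] at *
      simp [ih]
      ring

lemma Ddet_pos (s : ℕ → ℝ) (γ : ℕ → ℕ → ℂ)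
    (hs : ∀ l, 0 < s l) (hγ : ∀ k j, k < j → ‖γ k j‖ < 1) (r q : ℕ) :
    0 < Ddet s γ r q := by
  apply mul_pos
  · exact Finset.prod_pos fun k _ => hs k
  · apply Finset.prod_pos
    intro k _
    apply Finset.prod_pos
    intro j hj
    have : k < j := by have := (Finset.mem_Icc.1 hj).1; omega
    exact pow_pos (dd_pos hγ this) 2

lemma Ddet_split (s : ℕ → ℝ) (γ : ℕ → ℕ → ℂ) (l n : ℕ) :
    Ddet s γ l (l + n) =
      (s l * ∏ j ∈ Finset.Icc (l+1) (l+n), (dd γ l j) ^ 2) * Ddet s γ (l + 1) (l + n) := by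
  unfold Ddet
  have h : l ≤ l + n := by omega
  rw [Finset.Icc_eq_cons_Ioc h, Finset.prod_cons, Finset.prod_cons, ← Finset.Icc_add_one_left_eq_Ioc]
  ring

/-- For all `l ∈ ℕ` and `n ≥ 1`, the Schur parameter can be recovered from the orthogonal
polynomial and the determinants by `γ_{l,n+l} = -φ_n(0,l) √(D_{l,l+n} / D_{l+1,l+n})`. -/
theorem gamma_eq_of_phi_det (s : ℕ → ℝ) (γ : ℕ → ℕ → ℂ)
    (hs : ∀ l, 0 < s l) (hγ : ∀ k j, k < j → ‖γ k j‖ < 1) (n l : ℕ) (hn : 1 ≤ n) :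
    γ l (n + l) =
      -(phi s γ n l).eval 0 *
        ((Real.sqrt (Ddet s γ l (l + n) / Ddet s γ (l + 1) (l + n)) : ℝ) : ℂ) := by
  obtain ⟨m, rfl⟩ : ∃ m, n = m + 1 := ⟨n - 1, by omega⟩
  -- evaluate phi at 0
  have hphi : (phi s γ (m+1) l).eval 0 =
      ((dd γ l (m + 1 + l))⁻¹ : ℝ) * (-(γ l (m + 1 + l)) * (phiSharp s γ m l).eval 0) := by
    simp [phi, phiPair, phiSharp]
  -- sqrt of ratio
  have hDpos := Ddet_pos s γ hs hγ (l+1) (l + (m+1))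
  have hratio : Ddet s γ l (l + (m+1)) / Ddet s γ (l+1) (l + (m+1)) =
      s l * ∏ j ∈ Finset.Icc (l+1) (l + (m+1)), (dd γ l j) ^ 2 := by
    rw [Ddet_split]
    field_simp
  have hdnn : ∀ j ∈ Finset.Icc (l+1) (l + (m+1)), 0 ≤ dd γ l j := fun j hj =>
    (dd_pos hγ (by have := (Finset.mem_Icc.1 hj).1; omega)).le
  have hsqrt : Real.sqrt (Ddet s γ l (l + (m+1)) / Ddet s γ (l+1) (l + (m+1))) =
      Real.sqrt (s l) * ∏ j ∈ Finset.Icc (l+1) (l + (m+1)), dd γ l j := by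
    rw [hratio, Finset.prod_pow, Real.sqrt_mul (hs l).le,
      Real.sqrt_sq (Finset.prod_nonneg hdnn)]
  rw [hphi, hsqrt, phiSharp_eval_zero,
    show l + (m+1) = l + m + 1 from rfl,
    Finset.prod_Icc_succ_top (show l + 1 ≤ l + m + 1 by omega),
    show m + 1 + l = l + m + 1 from by omega]
  have ha : Real.sqrt (s l) ≠ 0 := (Real.sqrt_pos.2 (hs l)).ne'
  have hP : (∏ j ∈ Finset.Icc (l+1) (l+m), dd γ l j) ≠ 0 :=
    (Finset.prod_pos fun j hj =>
      dd_pos hγ (by have := (Finset.mem_Icc.1 hj).1; omega)).ne'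
  have hd : dd γ l (l + m + 1) ≠ 0 := (dd_pos hγ (by omega)).ne'
  push_cast
  rw [Finset.prod_inv_distrib]
  push_cast
  have haC : ((Real.sqrt (s l) : ℝ) : ℂ) ≠ 0 := Complex.ofReal_ne_zero.2 ha
  have hPC : ((∏ j ∈ Finset.Icc (l+1) (l+m), dd γ l j : ℝ) : ℂ) ≠ 0 :=
    Complex.ofReal_ne_zero.2 hP
  have hdC : ((dd γ l (l + m + 1) : ℝ) : ℂ) ≠ 0 := Complex.ofReal_ne_zero.2 hd
  push_cast at hPC
  field_simp
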